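/- arXiv:1805.03145 — 2 statements merged into one kernel-verified Lean document; each statement's English description precedes it below -/
import Mathlib

section
/- Let ℓ > 0, κ > 0 with sin(κℓ/3) ≠ 0 and cos(κℓ/6) ≠ 0, and σ ∈ ℝ. Set a = 1/sin(κℓ/3) and b = 1/cos(κℓ/6), and define u on [0,ℓ/2] by u(x) = a·sin(κx) for 0 ≤ x ≤ ℓ/3 and u(x) = b·cos(κ(ℓ/2 − x)) for ℓ/3 ≤ x ≤ ℓ/2. Then u is continuous with u(0) = 0 and u(ℓ/3) = 1, satisfies u'' + κ²u = 0 on (0,ℓ/3) and on (ℓ/3,ℓ/2), and the one-sided derivatives at ℓ/3 satisfy the jump condition u'(ℓ/3⁺) − u'(ℓ/3⁻) = σ·u(ℓ/3) if and only if σ = κ·(tan(κℓ/6) − cot(κℓ/3)). -/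
open Set Real Filter Topology

/-- For `a = 1/sin(κℓ/3)`, `b = 1/cos(κℓ/6)`, and `u(x) = a·sin(κx)` on `[0, ℓ/3]`,
`u(x) = b·cos(κ(ℓ/2 − x))` on `[ℓ/3, ℓ/2]`: `u` is continuous with `u(0) = 0` and
`u(ℓ/3) = 1`, satisfies `u'' + κ²u = 0` on `(0, ℓ/3)` and on `(ℓ/3, ℓ/2)`, and the
one-sided derivatives at `ℓ/3` satisfy `u'(ℓ/3⁺) − u'(ℓ/3⁻) = σ·u(ℓ/3)` if and
only if `σ = κ·(tan(κℓ/6) − cot(κℓ/3))`. -/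
theorem jump_condition_symmetric_third_eigenfunction
    (ℓ κ σ : ℝ) (hℓ : 0 < ℓ) (hκ : 0 < κ)
    (hsin : Real.sin (κ * ℓ / 3) ≠ 0) (hcos : Real.cos (κ * ℓ / 6) ≠ 0)
    (a b : ℝ) (ha : a = 1 / Real.sin (κ * ℓ / 3)) (hb : b = 1 / Real.cos (κ * ℓ / 6))
    (u : ℝ → ℝ)
    (hu1 : ∀ x : ℝ, 0 ≤ x → x ≤ ℓ / 3 → u x = a * Real.sin (κ * x))
    (hu2 : ∀ x : ℝ, ℓ / 3 ≤ x → x ≤ ℓ / 2 → u x = b * Real.cos (κ * (ℓ / 2 - x))) :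
    ContinuousOn u (Set.Icc 0 (ℓ / 2)) ∧ u 0 = 0 ∧ u (ℓ / 3) = 1 ∧
    (∀ x ∈ Set.Ioo 0 (ℓ / 3), deriv (deriv u) x + κ ^ 2 * u x = 0) ∧
    (∀ x ∈ Set.Ioo (ℓ / 3) (ℓ / 2), deriv (deriv u) x + κ ^ 2 * u x = 0) ∧
    (derivWithin u (Set.Ici (ℓ / 3)) (ℓ / 3) - derivWithin u (Set.Iic (ℓ / 3)) (ℓ / 3)
        = σ * u (ℓ / 3)
      ↔ σ = κ * (Real.tan (κ * ℓ / 6) - Real.cot (κ * ℓ / 3))) := by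
  have h03 : (0:ℝ) < ℓ / 3 := by linarith
  have h32 : ℓ / 3 < ℓ / 2 := by linarith
  set f : ℝ → ℝ := fun x => a * Real.sin (κ * x) with hf
  set g : ℝ → ℝ := fun x => b * Real.cos (κ * (ℓ / 2 - x)) with hg
  -- derivatives of f and g
  have hdf : ∀ x : ℝ, HasDerivAt f (a * κ * Real.cos (κ * x)) x := by
    intro x
    have h1 : HasDerivAt (fun x : ℝ => κ * x) (κ * 1) x := (hasDerivAt_id x).const_mul κ
    have h2 := (Real.hasDerivAt_sin (κ * x)).comp x h1
    have := h2.const_mul a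
    exact this.congr_deriv (by ring)
  have hdg : ∀ x : ℝ, HasDerivAt g (b * κ * Real.sin (κ * (ℓ / 2 - x))) x := by
    intro x
    have h1 : HasDerivAt (fun x : ℝ => κ * (ℓ / 2 - x)) (κ * (0 - 1)) x :=
      ((hasDerivAt_const x (ℓ / 2)).sub (hasDerivAt_id x)).const_mul κ
    have h2 := (Real.hasDerivAt_cos (κ * (ℓ / 2 - x))).comp x h1
    have := h2.const_mul b
    exact this.congr_deriv (by ring)
  have hue : u (ℓ / 3) = 1 := by
    rw [hu1 (ℓ / 3) h03.le le_rfl, show κ * (ℓ / 3) = κ * ℓ / 3 by ring, ha]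
    field_simp
  have hu0 : u 0 = 0 := by rw [hu1 0 le_rfl h03.le]; simp
  -- continuity
  have hcf : ContinuousOn u (Set.Icc 0 (ℓ / 3)) :=
    ((continuous_const.mul (Real.continuous_sin.comp (continuous_const.mul continuous_id))).continuousOn).congr
      (fun y hy => hu1 y hy.1 hy.2)
  have hcg : ContinuousOn u (Set.Icc (ℓ / 3) (ℓ / 2)) :=
    ((continuous_const.mul (Real.continuous_cos.comp (continuous_const.mul
      (continuous_const.sub continuous_id)))).continuousOn).congr
      (fun y hy => hu2 y hy.1 hy.2)
  have hcont : ContinuousOn u (Set.Icc 0 (ℓ / 2)) := by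
    rw [← Set.Icc_union_Icc_eq_Icc h03.le h32.le]
    intro x hx
    rw [continuousWithinAt_union]
    constructor
    · by_cases hmem : x ∈ Set.Icc 0 (ℓ / 3)
      · exact hcf x hmem
      · exact continuousWithinAt_of_notMem_closure (by rwa [isClosed_Icc.closure_eq])
    · by_cases hmem : x ∈ Set.Icc (ℓ / 3) (ℓ / 2)
      · exact hcg x hmem
      · exact continuousWithinAt_of_notMem_closure (by rwa [isClosed_Icc.closure_eq])
  -- ODE on first interval
  have hode1 : ∀ x ∈ Set.Ioo 0 (ℓ / 3), deriv (deriv u) x + κ ^ 2 * u x = 0 := by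
    intro x hx
    have hnb : Set.Ioo 0 (ℓ / 3) ∈ 𝓝 x := isOpen_Ioo.mem_nhds hx
    have heq : ∀ y ∈ Set.Ioo 0 (ℓ / 3), u y = f y := fun y hy => hu1 y hy.1.le hy.2.le
    have hder : deriv u =ᶠ[𝓝 x] fun y => a * κ * Real.cos (κ * y) := by
      filter_upwards [isOpen_Ioo.eventually_mem hx] with y hy
      have h1 : u =ᶠ[𝓝 y] f :=
        eventually_of_mem (isOpen_Ioo.mem_nhds hy) (fun z hz => heq z hz)
      rw [h1.deriv_eq, (hdf y).deriv]
    rw [hder.deriv_eq, hu1 x hx.1.le hx.2.le]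
    have h1 : HasDerivAt (fun y : ℝ => κ * y) (κ * 1) x := (hasDerivAt_id x).const_mul κ
    have h2 : HasDerivAt (fun y : ℝ => a * κ * Real.cos (κ * y))
        (-(a * κ ^ 2 * Real.sin (κ * x))) x := by
      exact (((Real.hasDerivAt_cos (κ * x)).comp x h1).const_mul (a * κ)).congr_deriv (by ring)
    rw [h2.deriv]
    ring
  have hode2 : ∀ x ∈ Set.Ioo (ℓ / 3) (ℓ / 2), deriv (deriv u) x + κ ^ 2 * u x = 0 := by
    intro x hx
    have heq : ∀ y ∈ Set.Ioo (ℓ / 3) (ℓ / 2), u y = g y := fun y hy => hu2 y hy.1.le hy.2.le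
    have hder : deriv u =ᶠ[𝓝 x] fun y => b * κ * Real.sin (κ * (ℓ / 2 - y)) := by
      filter_upwards [isOpen_Ioo.eventually_mem hx] with y hy
      have h1 : u =ᶠ[𝓝 y] g :=
        eventually_of_mem (isOpen_Ioo.mem_nhds hy) (fun z hz => heq z hz)
      rw [h1.deriv_eq, (hdg y).deriv]
    rw [hder.deriv_eq, hu2 x hx.1.le hx.2.le]
    have h1 : HasDerivAt (fun y : ℝ => κ * (ℓ / 2 - y)) (κ * (0 - 1)) x :=
      ((hasDerivAt_const x (ℓ / 2)).sub (hasDerivAt_id x)).const_mul κ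
    have h2 : HasDerivAt (fun y : ℝ => b * κ * Real.sin (κ * (ℓ / 2 - y)))
        (-(b * κ ^ 2 * Real.cos (κ * (ℓ / 2 - x)))) x := by
      exact (((Real.hasDerivAt_sin (κ * (ℓ / 2 - x))).comp x h1).const_mul (b * κ)).congr_deriv (by ring)
    rw [h2.deriv]
    ring
  -- one-sided derivatives
  have hright : derivWithin u (Set.Ici (ℓ / 3)) (ℓ / 3)
      = b * κ * Real.sin (κ * ℓ / 6) := by
    have hEq : u =ᶠ[𝓝[Set.Ici (ℓ / 3)] (ℓ / 3)] g := by
      filter_upwards [inter_mem_nhdsWithin (Set.Ici (ℓ / 3)) (Iio_mem_nhds h32)] with y hy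
      exact hu2 y hy.1 hy.2.le
    rw [hEq.derivWithin_eq (hu2 _ le_rfl h32.le),
      ((hdg (ℓ / 3)).hasDerivWithinAt).derivWithin (uniqueDiffOn_Ici _ _ Set.self_mem_Ici),
      show κ * (ℓ / 2 - ℓ / 3) = κ * ℓ / 6 by ring]
  have hleft : derivWithin u (Set.Iic (ℓ / 3)) (ℓ / 3)
      = a * κ * Real.cos (κ * ℓ / 3) := by
    have hEq : u =ᶠ[𝓝[Set.Iic (ℓ / 3)] (ℓ / 3)] f := by
      filter_upwards [inter_mem_nhdsWithin (Set.Iic (ℓ / 3)) (Ioi_mem_nhds h03)] with y hy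
      exact hu1 y hy.2.le hy.1
    rw [hEq.derivWithin_eq (hu1 _ h03.le le_rfl),
      ((hdf (ℓ / 3)).hasDerivWithinAt).derivWithin (uniqueDiffOn_Iic _ _ Set.self_mem_Iic),
      show κ * (ℓ / 3) = κ * ℓ / 3 by ring]
  refine ⟨hcont, hu0, hue, hode1, hode2, ?_⟩
  rw [hright, hleft, hue, ha, hb, Real.tan_eq_sin_div_cos, Real.cot_eq_cos_div_sin, mul_one]
  constructor
  · intro h; rw [← h]; field_simp
  · intro h; rw [h]; field_simp
end

section
/- Let ℓ > 0, κ > 0 with sin(κℓ/3) ≠ 0 and sin(κℓ/6) ≠ 0, and σ ∈ ℝ. Set a = 1/sin(κℓ/3) and b = 1/sin(κℓ/6), and define u on [0,ℓ/2] by u(x) = a·sin(κx) for 0 ≤ x ≤ ℓ/3 and u(x) = b·sin(κ(ℓ/2 − x)) for ℓ/3 ≤ x ≤ ℓ/2. Then u is continuous with u(0) = 0, u(ℓ/3) = 1 and u(ℓ/2) = 0, satisfies u'' + κ²u = 0 on (0,ℓ/3) and on (ℓ/3,ℓ/2), and the one-sided derivatives at ℓ/3 satisfy the jump condition u'(ℓ/3⁺)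 − u'(ℓ/3⁻) = σ·u(ℓ/3) if and only if σ = −κ·(cot(κℓ/3) + cot(κℓ/6)). -/
/-- For `a = 1/sin(κℓ/3)`, `b = 1/sin(κℓ/6)`, and `u(x) = a·sin(κx)` on `[0, ℓ/3]`,
`u(x) = b·sin(κ(ℓ/2 − x))` on `[ℓ/3, ℓ/2]`: `u` is continuous with `u(0) = 0`,
`u(ℓ/3) = 1` and `u(ℓ/2) = 0`, satisfies `u'' + κ²u = 0` on `(0, ℓ/3)` and on
`(ℓ/3, ℓ/2)`, and the one-sided derivatives at `ℓ/3` satisfy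
`u'(ℓ/3⁺) − u'(ℓ/3⁻) = σ·u(ℓ/3)` if and only if
`σ = −κ·(cot(κℓ/3) + cot(κℓ/6))`. -/
theorem jump_condition_antisymmetric_third_eigenfunction
    (ℓ κ σ : ℝ) (hℓ : 0 < ℓ) (hκ : 0 < κ)
    (hsin3 : Real.sin (κ * ℓ / 3) ≠ 0) (hsin6 : Real.sin (κ * ℓ / 6) ≠ 0)
    (a b : ℝ) (ha : a = 1 / Real.sin (κ * ℓ / 3)) (hb : b = 1 / Real.sin (κ * ℓ / 6))
    (u : ℝ → ℝ)
    (hu1 : ∀ x : ℝ, 0 ≤ x → x ≤ ℓ / 3 → u x = a * Real.sin (κ * x))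
    (hu2 : ∀ x : ℝ, ℓ / 3 ≤ x → x ≤ ℓ / 2 → u x = b * Real.sin (κ * (ℓ / 2 - x))) :
    ContinuousOn u (Set.Icc 0 (ℓ / 2)) ∧ u 0 = 0 ∧ u (ℓ / 3) = 1 ∧ u (ℓ / 2) = 0 ∧
    (∀ x ∈ Set.Ioo 0 (ℓ / 3), deriv (deriv u) x + κ ^ 2 * u x = 0) ∧
    (∀ x ∈ Set.Ioo (ℓ / 3) (ℓ / 2), deriv (deriv u) x + κ ^ 2 * u x = 0) ∧
    (derivWithin u (Set.Ici (ℓ / 3)) (ℓ / 3) - derivWithin u (Set.Iic (ℓ / 3)) (ℓ / 3)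
        = σ * u (ℓ / 3)
      ↔ σ = -κ * (Real.cot (κ * ℓ / 3) + Real.cot (κ * ℓ / 6))) := by
  have h36 : κ * (ℓ / 3) = κ * ℓ / 3 := by ring
  have h16 : κ * (ℓ / 2 - ℓ / 3) = κ * ℓ / 6 := by ring
  have h3pos : 0 < ℓ / 3 := by linarith
  have h32 : ℓ / 3 < ℓ / 2 := by linarith
  -- the two model functions
  set f : ℝ → ℝ := fun y => a * Real.sin (κ * y) with hfdef
  set g : ℝ → ℝ := fun y => b * Real.sin (κ * (ℓ / 2 - y)) with hgdef
  have hf : ∀ x, HasDerivAt f (a * (Real.cos (κ * x) * κ)) x := by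
    intro x
    have h1 : HasDerivAt (fun y : ℝ => κ * y) κ x := by
      simpa using (hasDerivAt_id x).const_mul κ
    exact ((Real.hasDerivAt_sin (κ * x)).comp x h1).const_mul a
  have hf' : ∀ x, HasDerivAt (fun y => a * (Real.cos (κ * y) * κ))
      (a * (-Real.sin (κ * x) * κ * κ)) x := by
    intro x
    have h1 : HasDerivAt (fun y : ℝ => κ * y) κ x := by
      simpa using (hasDerivAt_id x).const_mul κ
    have := (((Real.hasDerivAt_cos (κ * x)).comp x h1).mul_const κ).const_mul a
    exact this.congr_deriv (by ring)
  have hinner : ∀ x : ℝ, HasDerivAt (fun y : ℝ => κ * (ℓ / 2 - y)) (-κ) x := by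
    intro x
    have h0 : HasDerivAt (fun y : ℝ => ℓ / 2 - y) (-1) x := by
      simpa using (hasDerivAt_id x).const_sub (ℓ / 2)
    have := h0.const_mul κ
    exact this.congr_deriv (by ring)
  have hg : ∀ x, HasDerivAt g (b * (Real.cos (κ * (ℓ / 2 - x)) * (-κ))) x := by
    intro x
    exact ((Real.hasDerivAt_sin (κ * (ℓ / 2 - x))).comp x (hinner x)).const_mul b
  have hg' : ∀ x, HasDerivAt (fun y => b * (Real.cos (κ * (ℓ / 2 - y)) * (-κ)))
      (b * (-Real.sin (κ * (ℓ / 2 - x)) * κ * κ)) x := by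
    intro x
    have := (((Real.hasDerivAt_cos (κ * (ℓ / 2 - x))).comp x (hinner x)).mul_const (-κ)).const_mul b
    exact this.congr_deriv (by ring)
  -- pointwise values
  have hu0 : u 0 = 0 := by
    rw [hu1 0 le_rfl (le_of_lt h3pos)]; simp
  have hu3 : u (ℓ / 3) = 1 := by
    rw [hu1 (ℓ / 3) (le_of_lt h3pos) le_rfl, h36, ha]
    field_simp
  have hu2' : u (ℓ / 2) = 0 := by
    rw [hu2 (ℓ / 2) (le_of_lt h32) le_rfl]; simp
  -- continuity
  have hcf : ContinuousOn u (Set.Icc 0 (ℓ / 3)) := by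
    apply ContinuousOn.congr (f := f)
    · fun_prop
    · intro x hx; exact hu1 x hx.1 hx.2
  have hcg : ContinuousOn u (Set.Icc (ℓ / 3) (ℓ / 2)) := by
    apply ContinuousOn.congr (f := g)
    · fun_prop
    · intro x hx; exact hu2 x hx.1 hx.2
  have hcont : ContinuousOn u (Set.Icc 0 (ℓ / 2)) := by
    rw [← Set.Icc_union_Icc_eq_Icc (le_of_lt h3pos) (le_of_lt h32)]
    intro x hx
    have hs : ContinuousWithinAt u (Set.Icc 0 (ℓ / 3)) x := by
      by_cases h : x ∈ Set.Icc 0 (ℓ / 3)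
      · exact hcf x h
      · exact continuousWithinAt_of_notMem_closure (by rwa [isClosed_Icc.closure_eq])
    have ht : ContinuousWithinAt u (Set.Icc (ℓ / 3) (ℓ / 2)) x := by
      by_cases h : x ∈ Set.Icc (ℓ / 3) (ℓ / 2)
      · exact hcg x h
      · exact continuousWithinAt_of_notMem_closure (by rwa [isClosed_Icc.closure_eq])
    exact hs.union ht
  refine ⟨hcont, hu0, hu3, hu2', ?_, ?_, ?_⟩
  · -- ODE on (0, ℓ/3)
    intro x hx
    have hmem : Set.Ioo (0 : ℝ) (ℓ / 3) ∈ nhds x := isOpen_Ioo.mem_nhds hx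
    have heq : u =ᶠ[nhds x] f :=
      Filter.eventuallyEq_of_mem hmem fun y hy => hu1 y hy.1.le hy.2.le
    have hd1 : deriv u =ᶠ[nhds x] fun y => a * (Real.cos (κ * y) * κ) :=
      heq.deriv.trans (Filter.Eventually.of_forall fun y => (hf y).deriv)
    rw [hd1.deriv_eq, (hf' x).deriv, hu1 x hx.1.le hx.2.le]
    ring
  · -- ODE on (ℓ/3, ℓ/2)
    intro x hx
    have hmem : Set.Ioo (ℓ / 3) (ℓ / 2) ∈ nhds x := isOpen_Ioo.mem_nhds hx
    have heq : u =ᶠ[nhds x] g :=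
      Filter.eventuallyEq_of_mem hmem fun y hy => hu2 y hy.1.le hy.2.le
    have hd1 : deriv u =ᶠ[nhds x] fun y => b * (Real.cos (κ * (ℓ / 2 - y)) * (-κ)) :=
      heq.deriv.trans (Filter.Eventually.of_forall fun y => (hg y).deriv)
    rw [hd1.deriv_eq, (hg' x).deriv, hu2 x hx.1.le hx.2.le]
    ring
  · -- jump condition
    have hRmem : Set.Icc (ℓ / 3) (ℓ / 2) ∈ nhdsWithin (ℓ / 3) (Set.Ici (ℓ / 3)) := by
      have h1 : Set.Iic (ℓ / 2) ∈ nhds (ℓ / 3) := Iic_mem_nhds h32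
      have h2 := Filter.inter_mem (mem_nhdsWithin_of_mem_nhds h1)
        (self_mem_nhdsWithin (a := ℓ / 3) (s := Set.Ici (ℓ / 3)))
      refine Filter.mem_of_superset h2 ?_
      rintro y ⟨hy1, hy2⟩; exact ⟨hy2, hy1⟩
    have hLmem : Set.Icc 0 (ℓ / 3) ∈ nhdsWithin (ℓ / 3) (Set.Iic (ℓ / 3)) := by
      have h1 : Set.Ici (0 : ℝ) ∈ nhds (ℓ / 3) := Ici_mem_nhds h3pos
      have h2 := Filter.inter_mem (mem_nhdsWithin_of_mem_nhds h1)
        (self_mem_nhdsWithin (a := ℓ / 3) (s := Set.Iic (ℓ / 3)))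
      refine Filter.mem_of_superset h2 ?_
      rintro y ⟨hy1, hy2⟩; exact ⟨hy1, hy2⟩
    have heqR : u =ᶠ[nhdsWithin (ℓ / 3) (Set.Ici (ℓ / 3))] g :=
      Filter.eventuallyEq_of_mem hRmem fun y hy => hu2 y hy.1 hy.2
    have heqL : u =ᶠ[nhdsWithin (ℓ / 3) (Set.Iic (ℓ / 3))] f :=
      Filter.eventuallyEq_of_mem hLmem fun y hy => hu1 y hy.1 hy.2
    have hgx : u (ℓ / 3) = g (ℓ / 3) := hu2 (ℓ / 3) le_rfl h32.le
    have hfx : u (ℓ / 3) = f (ℓ / 3) := hu1 (ℓ / 3) h3pos.le le_rfl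
    have hR : HasDerivWithinAt u (b * (Real.cos (κ * (ℓ / 2 - ℓ / 3)) * (-κ)))
        (Set.Ici (ℓ / 3)) (ℓ / 3) :=
      ((hg (ℓ / 3)).hasDerivWithinAt).congr_of_eventuallyEq heqR hgx
    have hL : HasDerivWithinAt u (a * (Real.cos (κ * (ℓ / 3)) * κ))
        (Set.Iic (ℓ / 3)) (ℓ / 3) :=
      ((hf (ℓ / 3)).hasDerivWithinAt).congr_of_eventuallyEq heqL hfx
    rw [hR.derivWithin (uniqueDiffOn_Ici _ _ Set.self_mem_Ici),
      hL.derivWithin (uniqueDiffOn_Iic _ _ Set.self_mem_Iic), hu3, mul_one, h16, h36,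
      ha, hb, Real.cot_eq_cos_div_sin, Real.cot_eq_cos_div_sin]
    constructor
    · intro h
      field_simp at h ⊢
      linarith
    · intro h
      rw [h]
      field_simp
      ring
end
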